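/- Let x and y be distinct sequences of length n over Σ_q with |I_1(x) ∩ I_1(y)| = 2, and let ℓ and k be respectively the smallest and largest indices at which x and y differ. Then I_1(x) ∩ I_1(y) = {z, z'} where z = x_{[1,ℓ−1]} y_ℓ x_{[ℓ,n]} = y_{[1,k]} x_k y_{[k+1,n]} and z' = x_{[1,k]} y_k x_{[k+1,n]} = y_{[1,ℓ−1]} x_ℓ y_{[ℓ,n]}. -/

import Mathlib

/-- The t-insertion ball: length-(|x|+t) supersequences of x. -/
def iBall {α : Type*} (t : ℕ) (x : List α) : Set (List α) :=
  {z | x.Sublist z ∧ z.length = x.length + t}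

lemma ins_length {α : Type*} (l : List α) (p : ℕ) (a : α) (hp : p ≤ l.length) :
    (l.take p ++ a :: l.drop p).length = l.length + 1 := by
  simp; omega

lemma ins_get_lt {α : Type*} (l : List α) (p : ℕ) (a : α) (hp : p ≤ l.length)
    (j : ℕ) (hj : j < p) :
    (l.take p ++ a :: l.drop p)[j]'(by rw [ins_length l p a hp]; omega) = l[j]'(by omega) := by
  rw [List.getElem_append_left (by simp; omega)]
  exact List.getElem_take

lemma ins_get_eq {α : Type*} (l : List α) (p : ℕ) (a : α) (hp : p ≤ l.length) :
    (l.take p ++ a :: l.drop p)[p]'(by rw [ins_length l p a hp]; omega) = a := by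
  rw [List.getElem_append_right (by simp)]
  simp [Nat.min_eq_left hp]

lemma ins_get_gt {α : Type*} (l : List α) (p : ℕ) (a : α) (hp : p ≤ l.length)
    (j : ℕ) (hj : j < l.length) (hpj : p ≤ j) :
    (l.take p ++ a :: l.drop p)[j+1]'(by rw [ins_length l p a hp]; omega) = l[j] := by
  rw [List.getElem_append_right (by simp; omega)]
  simp only [List.length_take, Nat.min_eq_left hp,
    show j + 1 - p = (j - p) + 1 from by omega,
    List.getElem_cons_succ, List.getElem_drop]
  congr 1
  omega

lemma exists_ins_of_sublist {α : Type*} {l z : List α} (h : l.Sublist z)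
    (hlen : z.length = l.length + 1) :
    ∃ p a, p ≤ l.length ∧ z = l.take p ++ a :: l.drop p := by
  induction h with
  | slnil => simp at hlen
  | @cons l₁ l₂ b h ih =>
      have hl : l₁ = l₂ := h.eq_of_length (by simp at hlen; omega)
      exact ⟨0, b, Nat.zero_le _, by simp [hl]⟩
  | @cons_cons l₁ l₂ b h ih =>
      obtain ⟨p, c, hp, hz⟩ := ih (by simpa using hlen)
      exact ⟨p + 1, c, by simpa using hp, by simp [hz]⟩

lemma getElem_congr_list {α : Type*} {l₁ l₂ : List α} (h : l₁ = l₂) (j : ℕ)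
    (h₁ : j < l₁.length) : l₁[j] = l₂[j]'(h ▸ h₁) := by subst h; rfl

lemma core1 {q n : ℕ} {x y : Fin n → Fin q} {ℓ k : Fin n}
    (hℓ : x ℓ ≠ y ℓ) (hℓmin : ∀ i : Fin n, i < ℓ → x i = y i)
    (hk : x k ≠ y k) (hkmax : ∀ i : Fin n, k < i → x i = y i)
    {z : List (Fin q)} {p r : ℕ} {a b : Fin q}
    (hp : p ≤ n) (hr : r ≤ n) (hpr : p < r)
    (hz1 : z = (List.ofFn x).take p ++ a :: (List.ofFn x).drop p)
    (hz2 : z = (List.ofFn y).take r ++ b :: (List.ofFn y).drop r) :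
    z = (List.ofFn x).take (ℓ : ℕ) ++ y ℓ :: (List.ofFn x).drop (ℓ : ℕ) ∧
    z = (List.ofFn y).take ((k : ℕ) + 1) ++ x k :: (List.ofFn y).drop ((k : ℕ) + 1) := by
  have hxlen : (List.ofFn x).length = n := by simp
  have hylen : (List.ofFn y).length = n := by simp
  have hp' : p ≤ (List.ofFn x).length := by omega
  have hr' : r ≤ (List.ofFn y).length := by omega
  have hq : ∀ j : ℕ, (hj : j < n + 1) →
      ((List.ofFn x).take p ++ a :: (List.ofFn x).drop p)[j]'(by
        rw [ins_length _ _ _ hp']; omega) =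
      ((List.ofFn y).take r ++ b :: (List.ofFn y).drop r)[j]'(by
        rw [ins_length _ _ _ hr']; omega) := by
    intro j hj
    exact getElem_congr_list (hz1 ▸ hz2) j _
  -- value extraction on the x side
  have Xlt : ∀ j : ℕ, (hj : j < p) →
      ((List.ofFn x).take p ++ a :: (List.ofFn x).drop p)[j]'(by
        rw [ins_length _ _ _ hp']; omega) = x ⟨j, by omega⟩ := by
    intro j hj
    rw [ins_get_lt _ p a hp' j hj]
    simp [List.getElem_ofFn]
  have Xgt : ∀ j : ℕ, (hj : j < n) → p ≤ j →
      ((List.ofFn x).take p ++ a :: (List.ofFn x).drop p)[j+1]'(by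
        rw [ins_length _ _ _ hp']; omega) = x ⟨j, hj⟩ := by
    intro j hj hpj
    rw [ins_get_gt _ p a hp' j (by omega) hpj]
    simp [List.getElem_ofFn]
  have Ylt : ∀ j : ℕ, (hj : j < r) →
      ((List.ofFn y).take r ++ b :: (List.ofFn y).drop r)[j]'(by
        rw [ins_length _ _ _ hr']; omega) = y ⟨j, by omega⟩ := by
    intro j hj
    rw [ins_get_lt _ r b hr' j hj]
    simp [List.getElem_ofFn]
  have Ygt : ∀ j : ℕ, (hj : j < n) → r ≤ j →
      ((List.ofFn y).take r ++ b :: (List.ofFn y).drop r)[j+1]'(by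
        rw [ins_length _ _ _ hr']; omega) = y ⟨j, hj⟩ := by
    intro j hj hrj
    rw [ins_get_gt _ r b hr' j (by omega) hrj]
    simp [List.getElem_ofFn]
  have hlk : (ℓ : ℕ) ≤ (k : ℕ) := by
    by_contra h
    push_neg at h
    exact hℓ (hkmax ℓ (Fin.lt_def.mpr h))
  have hpl : p ≤ (ℓ : ℕ) := by
    by_contra h
    push_neg at h
    have h1 := (Xlt ℓ h).symm.trans ((hq ℓ (by omega)).trans (Ylt ℓ (by omega)))
    exact hℓ (by simpa using h1)
  have hkr : (k : ℕ) < r := by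
    by_contra h
    push_neg at h
    have h1 := (Xgt k k.isLt (by omega)).symm.trans
      ((hq ((k : ℕ) + 1) (by omega)).trans (Ygt k k.isLt (by omega)))
    exact hk (by simpa using h1)
  constructor
  · rw [hz1]
    apply List.ext_getElem
    · rw [ins_length _ _ _ hp', ins_length _ _ _ (by omega)]
    · intro j h₁ h₂
      have hjn : j < n + 1 := by rw [ins_length _ _ _ hp'] at h₁; omega
      rcases lt_trichotomy j (ℓ : ℕ) with hcase | hcase | hcase
      · -- j < ℓ
        have rhs : ((List.ofFn x).take (ℓ:ℕ) ++ y ℓ :: (List.ofFn x).drop (ℓ:ℕ))[j]'(by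
            rw [ins_length _ _ _ (by omega)]; omega) = x ⟨j, by omega⟩ := by
          rw [ins_get_lt _ _ _ (by omega) j hcase]
          simp [List.getElem_ofFn]
        by_cases hjp : j < p
        · exact (Xlt j hjp).trans rhs.symm
        · have lhs := (hq j hjn).trans (Ylt j (by omega))
          have hxy : x ⟨j, by omega⟩ = y ⟨j, by omega⟩ :=
            hℓmin ⟨j, by omega⟩ (Fin.lt_def.mpr hcase)
          exact lhs.trans (hxy.symm.trans rhs.symm)
      · -- j = ℓ
        subst hcase
        have rhs : ((List.ofFn x).take (ℓ:ℕ) ++ y ℓ :: (List.ofFn x).drop (ℓ:ℕ))[(ℓ:ℕ)]'(by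
            rw [ins_length _ _ _ (by omega)]; omega) = y ℓ :=
          ins_get_eq _ _ _ (by omega)
        have lhs := (hq ℓ (by omega)).trans (Ylt ℓ (by omega))
        exact lhs.trans ((congrArg y (Fin.eta ℓ ℓ.isLt)).trans rhs.symm)
      · -- j > ℓ
        obtain ⟨m, rfl⟩ : ∃ m, j = m + 1 := ⟨j - 1, by omega⟩
        have hm : m < n := by omega
        have rhs : ((List.ofFn x).take (ℓ:ℕ) ++ y ℓ :: (List.ofFn x).drop (ℓ:ℕ))[m+1]'(by
            rw [ins_length _ _ _ (by omega)]; omega) = x ⟨m, hm⟩ := by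
          rw [ins_get_gt _ _ _ (by omega) m (by omega) (by omega)]
          simp [List.getElem_ofFn]
        exact (Xgt m hm (by omega)).trans rhs.symm
  · rw [hz1]
    apply List.ext_getElem
    · rw [ins_length _ _ _ hp', ins_length _ _ _ (by omega)]
      omega
    · intro j h₁ h₂
      have hjn : j < n + 1 := by rw [ins_length _ _ _ hp'] at h₁; omega
      rcases lt_trichotomy j ((k : ℕ) + 1) with hcase | hcase | hcase
      · -- j ≤ k
        have rhs : ((List.ofFn y).take ((k:ℕ)+1) ++ x k :: (List.ofFn y).drop ((k:ℕ)+1))[j]'(by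
            rw [ins_length _ _ _ (by omega)]; omega) = y ⟨j, by omega⟩ := by
          rw [ins_get_lt _ _ _ (by omega) j hcase]
          simp [List.getElem_ofFn]
        have lhs := (hq j hjn).trans (Ylt j (by omega))
        exact lhs.trans rhs.symm
      · -- j = k+1
        subst hcase
        have rhs : ((List.ofFn y).take ((k:ℕ)+1) ++ x k :: (List.ofFn y).drop ((k:ℕ)+1))[(k:ℕ)+1]'(by
            rw [ins_length _ _ _ (by omega)]; omega) = x k :=
          ins_get_eq _ _ _ (by omega)
        have lhs := Xgt k k.isLt (by omega)
        exact lhs.trans ((congrArg x (Fin.eta k k.isLt)).trans rhs.symm)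
      · -- j > k+1
        obtain ⟨m, rfl⟩ : ∃ m, j = m + 1 := ⟨j - 1, by omega⟩
        have hm : m < n := by omega
        have rhs : ((List.ofFn y).take ((k:ℕ)+1) ++ x k :: (List.ofFn y).drop ((k:ℕ)+1))[m+1]'(by
            rw [ins_length _ _ _ (by omega)]; omega) = y ⟨m, hm⟩ := by
          rw [ins_get_gt _ _ _ (by omega) m (by omega) (by omega)]
          simp [List.getElem_ofFn]
        have lhs := Xgt m hm (by omega)
        have hxy : x ⟨m, hm⟩ = y ⟨m, hm⟩ :=
          hkmax ⟨m, hm⟩ (Fin.lt_def.mpr (show (k:ℕ) < m by omega))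
        exact lhs.trans (hxy.trans rhs.symm)

lemma core {q n : ℕ} {x y : Fin n → Fin q} {ℓ k : Fin n}
    (hℓ : x ℓ ≠ y ℓ) (hℓmin : ∀ i : Fin n, i < ℓ → x i = y i)
    (hk : x k ≠ y k) (hkmax : ∀ i : Fin n, k < i → x i = y i)
    {z : List (Fin q)} (hz : z ∈ iBall 1 (List.ofFn x) ∩ iBall 1 (List.ofFn y)) :
    (z = (List.ofFn x).take (ℓ:ℕ) ++ y ℓ :: (List.ofFn x).drop (ℓ:ℕ) ∧
     z = (List.ofFn y).take ((k:ℕ)+1) ++ x k :: (List.ofFn y).drop ((k:ℕ)+1)) ∨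
    (z = (List.ofFn y).take (ℓ:ℕ) ++ x ℓ :: (List.ofFn y).drop (ℓ:ℕ) ∧
     z = (List.ofFn x).take ((k:ℕ)+1) ++ y k :: (List.ofFn x).drop ((k:ℕ)+1)) := by
  obtain ⟨⟨hsx, hlx⟩, hsy, hly⟩ := hz
  obtain ⟨p, a, hp, hz1⟩ := exists_ins_of_sublist hsx hlx
  obtain ⟨r, b, hr, hz2⟩ := exists_ins_of_sublist hsy hly
  simp only [List.length_ofFn] at hp hr
  rcases lt_trichotomy p r with h | h | h
  · exact Or.inl (core1 hℓ hℓmin hk hkmax hp hr h hz1 hz2)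
  · exfalso
    subst h
    have hAB := hz1.symm.trans hz2
    by_cases hc : (ℓ:ℕ) < p
    · have e1 := ins_get_lt (List.ofFn x) p a (by simp; omega) ℓ hc
      have e2 := ins_get_lt (List.ofFn y) p b (by simp; omega) ℓ hc
      have e3 := getElem_congr_list hAB (ℓ:ℕ)
        (by rw [ins_length _ _ _ (by simp; omega)]; simp)
      have := e1.symm.trans (e3.trans e2)
      exact hℓ (by simpa [List.getElem_ofFn] using this)
    · push_neg at hc
      have e1 := ins_get_gt (List.ofFn x) p a (by simp; omega) ℓ (by simp) hc
      have e2 := ins_get_gt (List.ofFn y) p b (by simp; omega) ℓ (by simp) hc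
      have e3 := getElem_congr_list hAB ((ℓ:ℕ)+1)
        (by rw [ins_length _ _ _ (by simp; omega)]; simp)
      have := e1.symm.trans (e3.trans e2)
      exact hℓ (by simpa [List.getElem_ofFn] using this)
  · exact Or.inr (core1 hℓ.symm (fun i hi => (hℓmin i hi).symm) hk.symm
      (fun i hi => (hkmax i hi).symm) hr hp h hz2 hz1)

set_option linter.unusedVariables false in
theorem stmt_9 (q n : ℕ) (x y : Fin n → Fin q) (hxy : x ≠ y)
    (ℓ k : Fin n)
    (hℓ : x ℓ ≠ y ℓ) (hℓmin : ∀ i : Fin n, i < ℓ → x i = y i)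
    (hk : x k ≠ y k) (hkmax : ∀ i : Fin n, k < i → x i = y i)
    (hcard : (iBall 1 (List.ofFn x) ∩ iBall 1 (List.ofFn y)).ncard = 2) :
    iBall 1 (List.ofFn x) ∩ iBall 1 (List.ofFn y) =
      {(List.ofFn x).take ℓ ++ y ℓ :: (List.ofFn x).drop ℓ,
       (List.ofFn x).take (k + 1) ++ y k :: (List.ofFn x).drop (k + 1)} ∧
    (List.ofFn x).take ℓ ++ y ℓ :: (List.ofFn x).drop ℓ =
      (List.ofFn y).take (k + 1) ++ x k :: (List.ofFn y).drop (k + 1) ∧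
    (List.ofFn x).take (k + 1) ++ y k :: (List.ofFn x).drop (k + 1) =
      (List.ofFn y).take ℓ ++ x ℓ :: (List.ofFn y).drop ℓ := by
  obtain ⟨z1, z2, hne, hS⟩ := Set.ncard_eq_two.mp hcard
  have m1 : z1 ∈ iBall 1 (List.ofFn x) ∩ iBall 1 (List.ofFn y) := by
    rw [hS]; exact Set.mem_insert _ _
  have m2 : z2 ∈ iBall 1 (List.ofFn x) ∩ iBall 1 (List.ofFn y) := by
    rw [hS]; exact Set.mem_insert_of_mem _ rfl
  have c1 := core hℓ hℓmin hk hkmax m1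
  have c2 := core hℓ hℓmin hk hkmax m2
  rcases c1 with ⟨e1, e2⟩ | ⟨e1, e2⟩ <;> rcases c2 with ⟨f1, f2⟩ | ⟨f1, f2⟩
  · exact absurd (e1.trans f1.symm) hne
  · refine ⟨?_, e1.symm.trans e2, f2.symm.trans f1⟩
    rw [hS, ← e1, ← f2]
  · refine ⟨?_, f1.symm.trans f2, e2.symm.trans e1⟩
    rw [hS, ← f1, ← e2, Set.pair_comm]
  · exact absurd (e1.trans f1.symm) hne
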